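/- arXiv:2002.01959 — 2 statements merged into one kernel-verified Lean document; each statement's English description precedes it below -/
import Mathlib

section
/- Let H be a Hilbert space and H_1, ..., H_n closed subspaces of H. The system H_1, ..., H_n possesses the inverse best approximation property if and only if there exists a constant c > 0 such that ‖x_1 + ... + x_n‖ ≥ c √(‖x_1‖² + ... + ‖x_n‖²) for all x_1 ∈ H_1, ..., x_n ∈ H_n. -/
open ContinuousLinearMap in
private theorem surj_adjoint_iff_bddBelow
    {𝕜 E F : Type*} [RCLike 𝕜] [NormedAddCommGroup E] [InnerProductSpace 𝕜 E]
    [NormedAddCommGroup F] [InnerProductSpace 𝕜 F] [CompleteSpace E] [CompleteSpace F]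
    (T : E →L[𝕜] F) :
    Function.Surjective (ContinuousLinearMap.adjoint T) ↔
      ∃ c : ℝ, 0 < c ∧ ∀ e : E, c * ‖e‖ ≤ ‖T e‖ := by
  constructor
  · intro hsurj
    obtain ⟨C, Cpos, hC⟩ := (ContinuousLinearMap.adjoint T).exists_preimage_norm_le hsurj
    refine ⟨C⁻¹, inv_pos.2 Cpos, fun e => ?_⟩
    obtain ⟨y, hy, hny⟩ := hC e
    have h1 : ‖e‖ ^ 2 = RCLike.re (inner (𝕜 := 𝕜) y (T e)) := by
      rw [← ContinuousLinearMap.adjoint_inner_left, hy, inner_self_eq_norm_sq]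
    have h2 : RCLike.re (inner (𝕜 := 𝕜) y (T e)) ≤ ‖y‖ * ‖T e‖ :=
      le_trans (RCLike.re_le_norm _) (norm_inner_le_norm _ _)
    have h3 : ‖e‖ ^ 2 ≤ C * ‖e‖ * ‖T e‖ := by
      calc ‖e‖ ^ 2 ≤ ‖y‖ * ‖T e‖ := by rw [h1]; exact h2
      _ ≤ C * ‖e‖ * ‖T e‖ := by
          exact mul_le_mul_of_nonneg_right hny (norm_nonneg _)
    rcases eq_or_lt_of_le (norm_nonneg e) with h0 | h0
    · rw [← h0, mul_zero]; exact norm_nonneg _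
    · rw [inv_mul_eq_div, div_le_iff₀ Cpos] at *
      nlinarith
  · rintro ⟨c, hc, hb⟩
    set B := (ContinuousLinearMap.adjoint T).comp T with hBdef
    have key : ∀ e : E, c ^ 2 * ‖e‖ ^ 2 ≤ RCLike.re (inner (𝕜 := 𝕜) (B e) e) := by
      intro e
      have hBe : inner (𝕜 := 𝕜) (B e) e = inner (𝕜 := 𝕜) (T e) (T e) :=
        ContinuousLinearMap.adjoint_inner_left T e (T e)
      rw [hBe, inner_self_eq_norm_sq]
      have h := pow_le_pow_left₀ (mul_nonneg hc.le (norm_nonneg e)) (hb e) 2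
      calc c ^ 2 * ‖e‖ ^ 2 = (c * ‖e‖) ^ 2 := by ring
        _ ≤ ‖T e‖ ^ 2 := h
    have hc2 : (0:ℝ) < c ^ 2 := by positivity
    have lower : ∀ e : E, c ^ 2 * ‖e‖ ≤ ‖B e‖ := by
      intro e
      have h1 := key e
      have h2 : RCLike.re (inner (𝕜 := 𝕜) (B e) e) ≤ ‖B e‖ * ‖e‖ :=
        le_trans (RCLike.re_le_norm _) (norm_inner_le_norm _ _)
      rcases eq_or_lt_of_le (norm_nonneg e) with h0 | h0
      · rw [← h0, mul_zero]; exact norm_nonneg _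
      · nlinarith
    have anti : AntilipschitzWith ((c ^ 2)⁻¹).toNNReal B :=
      B.antilipschitz_of_bound fun e => by
        rw [Real.coe_toNNReal _ (by positivity), inv_mul_eq_div, le_div_iff₀ hc2]
        nlinarith [lower e]
    have hclosed : IsClosed (Set.range ⇑B) := anti.isClosed_range B.uniformContinuous
    set R := LinearMap.range (B : E →ₗ[𝕜] E) with hRdef
    have hRclosed : IsClosed ((R : Set E)) := by
      rw [hRdef, LinearMap.coe_range]; exact hclosed
    haveI : CompleteSpace R := hRclosed.completeSpace_coe
    have horth : Rᗮ = ⊥ := by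
      rw [Submodule.eq_bot_iff]
      intro v hv
      have h0 : inner (𝕜 := 𝕜) (B v) v = 0 :=
        (Submodule.mem_orthogonal R v).1 hv (B v) ⟨v, rfl⟩
      have h1 := key v
      rw [h0, map_zero] at h1
      have h2 : ‖v‖ ^ 2 = 0 := le_antisymm (by nlinarith [h1, hc2]) (sq_nonneg _)
      have h3 : ‖v‖ = 0 := by
        have := h2
        nlinarith [norm_nonneg v, sq_nonneg (‖v‖ - 0)]
      simpa using h3
    have hR : R = ⊤ := Submodule.orthogonal_eq_bot_iff.1 horth
    intro f
    have hf : f ∈ R := hR ▸ Submodule.mem_top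
    obtain ⟨g, hg⟩ := hf
    exact ⟨T g, hg⟩

noncomputable def orthProjCLM {𝕜 H : Type*} [RCLike 𝕜] [NormedAddCommGroup H]
    [InnerProductSpace 𝕜 H] [CompleteSpace H] (K : Submodule 𝕜 H)
    (hK : IsClosed (K : Set H)) : H →L[𝕜] H :=
  haveI : CompleteSpace K := hK.completeSpace_coe
  K.subtypeL.comp K.orthogonalProjection

/-- The system of closed subspaces `K 0, ..., K (n-1)` possesses the
inverse best approximation property: for arbitrary `x i ∈ K i` there is `y`
whose orthogonal projection onto each `K i` equals `x i`. -/
def IBAP {𝕜 H : Type*} [RCLike 𝕜] [NormedAddCommGroup H] [InnerProductSpace 𝕜 H]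
    [CompleteSpace H] {n : ℕ} (K : Fin n → Submodule 𝕜 H)
    (hK : ∀ i, IsClosed ((K i : Set H))) : Prop :=
  ∀ x : Fin n → H, (∀ i, x i ∈ K i) →
    ∃ y : H, ∀ i, orthProjCLM (K i) (hK i) y = x i


/-- IBAP iff there is `c > 0` with
`‖x 1 + ... + x n‖ ≥ c √(‖x 1‖² + ... + ‖x n‖²)` for all `x i ∈ K i`. -/
theorem stmt_5 {𝕜 H : Type*} [RCLike 𝕜] [NormedAddCommGroup H]
    [InnerProductSpace 𝕜 H] [CompleteSpace H] {n : ℕ}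
    (K : Fin n → Submodule 𝕜 H) (hK : ∀ i, IsClosed ((K i : Set H))) :
    IBAP K hK ↔
      ∃ c : ℝ, 0 < c ∧ ∀ x : Fin n → H, (∀ i, x i ∈ K i) →
        c * Real.sqrt (∑ i, ‖x i‖ ^ 2) ≤ ‖∑ i, x i‖ := by
  haveI : ∀ i, CompleteSpace (K i) := fun i => (hK i).completeSpace_coe
  haveI : CompleteSpace (PiLp 2 (fun i => (K i : Type _))) := by
    have : CompleteSpace (∀ i, (K i : Type _)) := inferInstance
    infer_instance
  let S : PiLp 2 (fun i => K i) →L[𝕜] H :=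
    ∑ i, (K i).subtypeL.comp (PiLp.proj 2 (fun i => K i) i)
  have hS : ∀ e : PiLp 2 (fun i => K i), S e = ∑ i, ((e i : H)) := by
    intro e
    simp [S, ContinuousLinearMap.sum_apply]
  have hnorm : ∀ e : PiLp 2 (fun i => K i),
      ‖e‖ = Real.sqrt (∑ i, ‖(e i : H)‖ ^ 2) := by
    intro e
    rw [PiLp.norm_eq_of_L2]
    congr 1
  have hadj : ∀ y : H, ∀ i,
      ((ContinuousLinearMap.adjoint S y) i : H) = ((K i).orthogonalProjection y : H) := by
    intro y i
    symm
    apply Submodule.eq_starProjection_of_mem_of_inner_eq_zero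
      (SetLike.coe_mem ((ContinuousLinearMap.adjoint S y) i))
    intro w hw
    rw [inner_sub_left, sub_eq_zero]
    set δ : PiLp 2 (fun i => K i) := (WithLp.equiv 2 _).symm (Pi.single i ⟨w, hw⟩) with hδ
    have h1 : inner (𝕜 := 𝕜) (ContinuousLinearMap.adjoint S y) δ
        = inner (𝕜 := 𝕜) y (S δ) := ContinuousLinearMap.adjoint_inner_left S δ y
    have hSδ : S δ = w := by
      rw [hS]
      rw [Fintype.sum_eq_single i (fun j hj => ?_)]
      · simp [hδ]
      · simp [hδ, Pi.single_eq_of_ne hj]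
    have h2 : inner (𝕜 := 𝕜) (ContinuousLinearMap.adjoint S y) δ
        = inner (𝕜 := 𝕜) ((ContinuousLinearMap.adjoint S y) i : H) w := by
      rw [PiLp.inner_apply]
      rw [Fintype.sum_eq_single i (fun j hj => ?_)]
      · simp [hδ, Submodule.coe_inner]
      · simp [hδ, Pi.single_eq_of_ne hj, Submodule.coe_inner]
    rw [← h2, h1, hSδ]
  have hIB : IBAP K hK ↔ Function.Surjective (ContinuousLinearMap.adjoint S) := by
    constructor
    · intro h e
      obtain ⟨y, hy⟩ := h (fun i => (e i : H)) (fun i => (e i).2)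
      refine ⟨y, ?_⟩
      apply PiLp.ext; intro i
      apply Subtype.coe_injective
      show ((ContinuousLinearMap.adjoint S y) i : H) = ((e i : H))
      rw [hadj y i]
      exact hy i
    · intro hs x hx
      obtain ⟨y, hy⟩ := hs ((WithLp.equiv 2 _).symm (fun i => ⟨x i, hx i⟩))
      refine ⟨y, fun i => ?_⟩
      have h1 : ((ContinuousLinearMap.adjoint S y) i : H) = x i := by
        rw [hy]; simp
      show (((K i).orthogonalProjection y : H)) = x i
      rw [← hadj y i, h1]
  have hN : (∃ c : ℝ, 0 < c ∧ ∀ x : Fin n → H, (∀ i, x i ∈ K i) →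
        c * Real.sqrt (∑ i, ‖x i‖ ^ 2) ≤ ‖∑ i, x i‖)
      ↔ ∃ c : ℝ, 0 < c ∧ ∀ e : PiLp 2 (fun i => K i), c * ‖e‖ ≤ ‖S e‖ := by
    constructor
    · rintro ⟨c, hc, h⟩
      refine ⟨c, hc, fun e => ?_⟩
      rw [hS e, hnorm e]
      exact h (fun i => (e i : H)) (fun i => (e i).2)
    · rintro ⟨c, hc, h⟩
      refine ⟨c, hc, fun x hx => ?_⟩
      have := h ((WithLp.equiv 2 _).symm (fun i => ⟨x i, hx i⟩))
      rw [hS, hnorm] at this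
      simpa using this
  rw [hIB, surj_adjoint_iff_bddBelow S]
  exact hN.symm
end

section
/- Let H be a Hilbert space and H_1, ..., H_n closed subspaces of H. The system H_1, ..., H_n possesses the inverse best approximation property if and only if for every i = 1, ..., n one has H_i^⊥ + ⋂_{j≠i} H_j^⊥ = H. -/
section Helpers

variable {𝕜 H : Type*} [RCLike 𝕜] [NormedAddCommGroup H] [InnerProductSpace 𝕜 H]
  [CompleteSpace H]

lemma orthProjCLM_eq_zero_iff (K : Submodule 𝕜 H) (hK : IsClosed (K : Set H)) (v : H) :
    orthProjCLM K hK v = 0 ↔ v ∈ Kᗮ := by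
  haveI : CompleteSpace K := hK.completeSpace_coe
  simp only [orthProjCLM, ContinuousLinearMap.comp_apply, Submodule.subtypeL_apply,
    Submodule.coe_eq_zero]
  exact Submodule.orthogonalProjectionOnto_eq_zero_iff

lemma orthProjCLM_eq_self (K : Submodule 𝕜 H) (hK : IsClosed (K : Set H)) {v : H}
    (hv : v ∈ K) : orthProjCLM K hK v = v := by
  haveI : CompleteSpace K := hK.completeSpace_coe
  simp only [orthProjCLM, ContinuousLinearMap.comp_apply, Submodule.subtypeL_apply]
  exact congrArg _ (Submodule.orthogonalProjectionOnto_mem_subspace_eq_self ⟨v, hv⟩)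

lemma orthProjCLM_mem (K : Submodule 𝕜 H) (hK : IsClosed (K : Set H)) (v : H) :
    orthProjCLM K hK v ∈ K := by
  haveI : CompleteSpace K := hK.completeSpace_coe
  exact Submodule.coe_mem (K.orthogonalProjection v)

end Helpers

/-- IBAP iff `(K i)ᗮ + ⋂_{j ≠ i} (K j)ᗮ = H` for every `i`. -/
theorem stmt_10 {𝕜 H : Type*} [RCLike 𝕜] [NormedAddCommGroup H]
    [InnerProductSpace 𝕜 H] [CompleteSpace H] {n : ℕ}
    (K : Fin n → Submodule 𝕜 H) (hK : ∀ i, IsClosed ((K i : Set H))) :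
    IBAP K hK ↔
      ∀ i, (K i)ᗮ ⊔ (⨅ j, ⨅ (_ : j ≠ i), (K j)ᗮ) = (⊤ : Submodule 𝕜 H) := by
  constructor
  · intro hIBAP i
    rw [eq_top_iff]
    intro h _
    obtain ⟨y, hy⟩ := hIBAP (fun j => if j = i then orthProjCLM (K i) (hK i) h else 0)
      (by
        intro j
        by_cases hj : j = i
        · subst hj; simpa using orthProjCLM_mem (K j) (hK j) h
        · simp [hj])
    have hyi : orthProjCLM (K i) (hK i) y = orthProjCLM (K i) (hK i) h := by
      simpa using hy i
    have h1 : h - y ∈ (K i)ᗮ := by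
      rw [← orthProjCLM_eq_zero_iff (K i) (hK i)]
      rw [map_sub, hyi, sub_self]
    have h2 : y ∈ ⨅ j, ⨅ (_ : j ≠ i), (K j)ᗮ := by
      rw [Submodule.mem_iInf]
      intro j
      rw [Submodule.mem_iInf]
      intro hj
      rw [← orthProjCLM_eq_zero_iff (K j) (hK j)]
      simpa [hj] using hy j
    have : h = (h - y) + y := by abel
    rw [this]
    exact Submodule.add_mem_sup h1 h2
  · intro hsup x hx
    have hdecomp : ∀ i, ∃ u ∈ (K i)ᗮ, ∃ v ∈ ⨅ j, ⨅ (_ : j ≠ i), (K j)ᗮ, u + v = x i := by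
      intro i
      have hm : x i ∈ (K i)ᗮ ⊔ (⨅ j, ⨅ (_ : j ≠ i), (K j)ᗮ) := by
        rw [hsup i]; trivial
      exact Submodule.mem_sup.mp hm
    choose u hu v hv huv using hdecomp
    refine ⟨∑ j, v j, fun i => ?_⟩
    rw [map_sum, Finset.sum_eq_single i]
    · have h1 : orthProjCLM (K i) (hK i) (u i) = 0 :=
        (orthProjCLM_eq_zero_iff _ _ _).mpr (hu i)
      have h2 : orthProjCLM (K i) (hK i) (u i + v i) = x i := by
        rw [huv i]; exact orthProjCLM_eq_self _ _ (hx i)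
      rw [map_add, h1, zero_add] at h2
      exact h2
    · intro j _ hj
      have : v j ∈ (K i)ᗮ := by
        have := hv j
        rw [Submodule.mem_iInf] at this
        have := this i
        rw [Submodule.mem_iInf] at this
        exact this (Ne.symm hj)
      exact (orthProjCLM_eq_zero_iff _ _ _).mpr this
    · intro hni
      exact absurd (Finset.mem_univ i) hni
end
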